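/- Let Y_t = L(A_t) be a trawl process with homogeneous Lévy basis L and trawl A of finite Lebesgue measure. Then for s < t the cumulant function of the increment satisfies C(ζ ‡ Y_t − Y_s) = Leb(A_{t−s} \ A_0)·C(ζ ‡ L') + Leb(A_0 \ A_{t−s})·C(−ζ ‡ L'), using the independence of L on the disjoint sets A_t \ A_s and A_s \ A_t and the translation invariance of Lebesgue measure. -/

import Mathlib

open MeasureTheory ProbabilityTheory

private lemma shift_measurable (d : ℕ) (c : ℝ) :
    Measurable (fun p : (Fin d → ℝ) × ℝ => (p.1, p.2 + c)) :=
  measurable_fst.prodMk (measurable_snd.add_const c)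

private lemma shift_injective (d : ℕ) (c : ℝ) :
    Function.Injective (fun p : (Fin d → ℝ) × ℝ => (p.1, p.2 + c)) := by
  intro p q h
  simp only [Prod.ext_iff, add_left_inj] at h
  exact Prod.ext h.1 h.2

private lemma shift_image_eq_preimage (d : ℕ) (c : ℝ) (B : Set ((Fin d → ℝ) × ℝ)) :
    (fun p : (Fin d → ℝ) × ℝ => (p.1, p.2 + c)) '' B
      = (fun p : (Fin d → ℝ) × ℝ => (p.1, p.2 + -c)) ⁻¹' B := by
  have h₁ : Function.LeftInverse (fun p : (Fin d → ℝ) × ℝ => (p.1, p.2 + -c))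
      (fun p : (Fin d → ℝ) × ℝ => (p.1, p.2 + c)) := fun p => by simp [add_assoc]
  have h₂ : Function.RightInverse (fun p : (Fin d → ℝ) × ℝ => (p.1, p.2 + -c))
      (fun p : (Fin d → ℝ) × ℝ => (p.1, p.2 + c)) := fun p => by simp [add_assoc]
  exact congrFun (Set.image_eq_preimage_of_inverse h₁ h₂) B

private lemma shift_image_measurableSet {d : ℕ} (c : ℝ) {B : Set ((Fin d → ℝ) × ℝ)}
    (hB : MeasurableSet B) :
    MeasurableSet ((fun p : (Fin d → ℝ) × ℝ => (p.1, p.2 + c)) '' B) := by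
  rw [shift_image_eq_preimage]
  exact (shift_measurable d (-c)) hB

private lemma shift_measurePreserving (d : ℕ) (c : ℝ) :
    MeasurePreserving (fun p : (Fin d → ℝ) × ℝ => (p.1, p.2 + c)) volume volume := by
  have h : (fun p : (Fin d → ℝ) × ℝ => (p.1, p.2 + c)) = Prod.map id (· + c) := rfl
  rw [h, show (volume : Measure ((Fin d → ℝ) × ℝ))
      = (volume : Measure (Fin d → ℝ)).prod volume from MeasureTheory.Measure.volume_eq_prod .. ]
  exact (MeasurePreserving.id _).prod (measurePreserving_add_right volume c)

private lemma shift_image_volume {d : ℕ} (c : ℝ) {B : Set ((Fin d → ℝ) × ℝ)}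
    (hB : MeasurableSet B) :
    volume ((fun p : (Fin d → ℝ) × ℝ => (p.1, p.2 + c)) '' B) = volume B := by
  rw [shift_image_eq_preimage]
  exact (shift_measurePreserving d (-c)).measure_preimage hB.nullMeasurableSet

private lemma indep_integral_mul_complex {Ω : Type*} [MeasurableSpace Ω] {P : Measure Ω}
    {f g : Ω → ℂ} (h : IndepFun f g P) (hf : Integrable f P) (hg : Integrable g P) :
    ∫ ω, f ω * g ω ∂P = (∫ ω, f ω ∂P) * (∫ ω, g ω ∂P) := by
  have hrr : IndepFun (fun ω => (f ω).re) (fun ω => (g ω).re) P :=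
    h.comp Complex.measurable_re Complex.measurable_re
  have hri : IndepFun (fun ω => (f ω).re) (fun ω => (g ω).im) P :=
    h.comp Complex.measurable_re Complex.measurable_im
  have hir : IndepFun (fun ω => (f ω).im) (fun ω => (g ω).re) P :=
    h.comp Complex.measurable_im Complex.measurable_re
  have hii : IndepFun (fun ω => (f ω).im) (fun ω => (g ω).im) P :=
    h.comp Complex.measurable_im Complex.measurable_im
  have hfr : Integrable (fun ω => (f ω).re) P := hf.re
  have hfi : Integrable (fun ω => (f ω).im) P := hf.im
  have hgr : Integrable (fun ω => (g ω).re) P := hg.re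
  have hgi : Integrable (fun ω => (g ω).im) P := hg.im
  have hfg : Integrable (fun ω => f ω * g ω) P := h.integrable_mul hf hg
  have kre := integral_re (𝕜 := ℂ) hfg
  have kim := integral_im (𝕜 := ℂ) hfg
  have kfr := integral_re (𝕜 := ℂ) hf
  have kfi := integral_im (𝕜 := ℂ) hf
  have kgr := integral_re (𝕜 := ℂ) hg
  have kgi := integral_im (𝕜 := ℂ) hg
  simp only [RCLike.re_to_complex, RCLike.im_to_complex] at kre kim kfr kfi kgr kgi
  apply Complex.ext
  · rw [← kre, Complex.mul_re, ← kfr, ← kgr, ← kfi, ← kgi,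
      ← hrr.integral_mul_eq_mul_integral hfr.1 hgr.1, ← hii.integral_mul_eq_mul_integral hfi.1 hgi.1]
    simp only [Complex.mul_re, Pi.mul_apply]
    exact integral_sub (hrr.integrable_mul hfr hgr) (hii.integrable_mul hfi hgi)
  · rw [← kim, Complex.mul_im, ← kfr, ← kgr, ← kfi, ← kgi,
      ← hri.integral_mul_eq_mul_integral hfr.1 hgi.1, ← hir.integral_mul_eq_mul_integral hfi.1 hgr.1]
    simp only [Complex.mul_im, Pi.mul_apply]
    exact integral_add (hri.integrable_mul hfr hgi) (hir.integrable_mul hfi hgr)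

/-- For a trawl process `Y_t = L(A_t)` with homogeneous Lévy basis `L` (cumulant
`log E[exp(iζL(B))] = Leb(B)·C(ζ)`, additivity, and independence on disjoint sets),
the characteristic function of the increment satisfies, for `s < t`,
`E[exp(iζ(Y_t − Y_s))] = exp(Leb(A_{t−s} \ A_0)·C(ζ) + Leb(A_0 \ A_{t−s})·C(−ζ))`. -/
theorem stmt_8 {Ω : Type*} [MeasurableSpace Ω] (P : Measure Ω) [IsProbabilityMeasure P]
    (d : ℕ) (L : Set ((Fin d → ℝ) × ℝ) → Ω → ℝ) (C : ℝ → ℂ)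
    (hL : ∀ B : Set ((Fin d → ℝ) × ℝ), MeasurableSet B → volume B < ⊤ → ∀ ζ : ℝ,
      ∫ ω, Complex.exp (Complex.I * ζ * (L B ω)) ∂P
        = Complex.exp (((volume B).toReal : ℂ) * C ζ))
    (hadd : ∀ B₁ B₂ : Set ((Fin d → ℝ) × ℝ), MeasurableSet B₁ → MeasurableSet B₂ →
      volume B₁ < ⊤ → volume B₂ < ⊤ → Disjoint B₁ B₂ →
      ∀ᵐ ω ∂P, L (B₁ ∪ B₂) ω = L B₁ ω + L B₂ ω)
    (hindep : ∀ B₁ B₂ : Set ((Fin d → ℝ) × ℝ), MeasurableSet B₁ → MeasurableSet B₂ →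
      volume B₁ < ⊤ → volume B₂ < ⊤ → Disjoint B₁ B₂ → IndepFun (L B₁) (L B₂) P)
    (A : Set ((Fin d → ℝ) × ℝ)) (hA : MeasurableSet A) (hAfin : volume A < ⊤)
    (s t ζ : ℝ) (hst : s < t) :
    ∫ ω, Complex.exp (Complex.I * ζ *
        ((L ((fun p : (Fin d → ℝ) × ℝ => (p.1, p.2 + t)) '' A) ω)
          - (L ((fun p : (Fin d → ℝ) × ℝ => (p.1, p.2 + s)) '' A) ω))) ∂P
      = Complex.exp
          (((volume (((fun p : (Fin d → ℝ) × ℝ => (p.1, p.2 + (t - s))) '' A) \ A)).toReal : ℂ)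
              * C ζ
            + ((volume (A \ ((fun p : (Fin d → ℝ) × ℝ => (p.1, p.2 + (t - s))) '' A))).toReal : ℂ)
              * C (-ζ)) := by
  set At := (fun p : (Fin d → ℝ) × ℝ => (p.1, p.2 + t)) '' A with hAt_def
  set As := (fun p : (Fin d → ℝ) × ℝ => (p.1, p.2 + s)) '' A with hAs_def
  set D := (fun p : (Fin d → ℝ) × ℝ => (p.1, p.2 + (t - s))) '' A with hD_def
  have hAt : MeasurableSet At := shift_image_measurableSet t hA
  have hAs : MeasurableSet As := shift_image_measurableSet s hA
  have hD : MeasurableSet D := shift_image_measurableSet (t - s) hA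
  have hfinAt : volume At < ⊤ := by rw [hAt_def, shift_image_volume t hA]; exact hAfin
  have hfinAs : volume As < ⊤ := by rw [hAs_def, shift_image_volume s hA]; exact hAfin
  -- composition identity
  have hcomp : (fun p : (Fin d → ℝ) × ℝ => (p.1, p.2 + s)) '' D = At := by
    rw [hD_def, hAt_def, Set.image_image]
    have : (fun p : (Fin d → ℝ) × ℝ => ((p.1, p.2 + (t - s)).1, (p.1, p.2 + (t - s)).2 + s))
        = fun p : (Fin d → ℝ) × ℝ => (p.1, p.2 + t) := by
      funext p; simp only; congr 1; ring
    rw [this]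
  have hdiff1 : At \ As = (fun p : (Fin d → ℝ) × ℝ => (p.1, p.2 + s)) '' (D \ A) := by
    rw [Set.image_diff (shift_injective d s), hcomp, hAs_def]
  have hdiff2 : As \ At = (fun p : (Fin d → ℝ) × ℝ => (p.1, p.2 + s)) '' (A \ D) := by
    rw [Set.image_diff (shift_injective d s), hcomp, hAs_def]
  set B₁ := At \ As with hB₁_def
  set B₂ := As \ At with hB₂_def
  have hmB₁ : MeasurableSet B₁ := hAt.diff hAs
  have hmB₂ : MeasurableSet B₂ := hAs.diff hAt
  have hmI : MeasurableSet (At ∩ As) := hAt.inter hAs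
  have hfinB₁ : volume B₁ < ⊤ := lt_of_le_of_lt (measure_mono Set.diff_subset) hfinAt
  have hfinB₂ : volume B₂ < ⊤ := lt_of_le_of_lt (measure_mono Set.diff_subset) hfinAs
  have hfinI : volume (At ∩ As) < ⊤ :=
    lt_of_le_of_lt (measure_mono Set.inter_subset_left) hfinAt
  -- volumes of B₁, B₂
  have hvolB₁ : volume B₁ = volume (D \ A) := by
    rw [hdiff1]; exact shift_image_volume s (hD.diff hA)
  have hvolB₂ : volume B₂ = volume (A \ D) := by
    rw [hdiff2]; exact shift_image_volume s (hA.diff hD)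
  -- a.e. additivity
  have e1 := hadd B₁ (At ∩ As) hmB₁ hmI hfinB₁ hfinI
    (Set.disjoint_sdiff_left.mono_right Set.inter_subset_right)
  have e2 := hadd B₂ (At ∩ As) hmB₂ hmI hfinB₂ hfinI
    (Set.disjoint_sdiff_left.mono_right Set.inter_subset_left)
  rw [Set.diff_union_inter] at e1
  rw [show B₂ ∪ (At ∩ As) = As by rw [Set.inter_comm]; exact Set.diff_union_inter As At] at e2
  have hae : ∀ᵐ ω ∂P, L At ω - L As ω = L B₁ ω - L B₂ ω := by
    filter_upwards [e1, e2] with ω h1 h2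
    rw [h1, h2]; ring
  -- rewrite the integrand
  have hcong : (fun ω => Complex.exp (Complex.I * ζ * ((L At ω) - (L As ω))))
      =ᵐ[P] fun ω => Complex.exp (Complex.I * ζ * (L B₁ ω))
        * Complex.exp (Complex.I * ((-ζ : ℝ) : ℂ) * (L B₂ ω)) := by
    filter_upwards [hae] with ω h
    rw [← Complex.ofReal_sub, h, Complex.ofReal_sub, ← Complex.exp_add]
    congr 1
    push_cast
    ring
  rw [integral_congr_ae hcong]
  -- independence and integrability
  have hind : IndepFun (L B₁) (L B₂) P :=
    hindep B₁ B₂ hmB₁ hmB₂ hfinB₁ hfinB₂ disjoint_sdiff_sdiff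
  have hm1 : Measurable fun x : ℝ => Complex.exp (Complex.I * ζ * (x : ℂ)) := by
    fun_prop
  have hm2 : Measurable fun x : ℝ => Complex.exp (Complex.I * ((-ζ : ℝ) : ℂ) * (x : ℂ)) := by
    fun_prop
  have hindc : IndepFun (fun ω => Complex.exp (Complex.I * ζ * (L B₁ ω)))
      (fun ω => Complex.exp (Complex.I * ((-ζ : ℝ) : ℂ) * (L B₂ ω))) P :=
    hind.comp hm1 hm2
  have hI1 : Integrable (fun ω => Complex.exp (Complex.I * ζ * (L B₁ ω))) P := by
    by_contra h
    have h0 := integral_undef h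
    rw [hL B₁ hmB₁ hfinB₁ ζ] at h0
    exact Complex.exp_ne_zero _ h0
  have hI2 : Integrable (fun ω => Complex.exp (Complex.I * ((-ζ : ℝ) : ℂ) * (L B₂ ω))) P := by
    by_contra h
    have h0 := integral_undef h
    rw [hL B₂ hmB₂ hfinB₂ (-ζ)] at h0
    exact Complex.exp_ne_zero _ h0
  rw [indep_integral_mul_complex hindc hI1 hI2, hL B₁ hmB₁ hfinB₁ ζ, hL B₂ hmB₂ hfinB₂ (-ζ),
    ← Complex.exp_add, hvolB₁, hvolB₂]
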